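/- Let x and ω, ω' be unit vectors in ℝ^N, let θ (resp. θ') be the angle between x and ω (resp. x and ω'), and suppose the chord-length difference satisfies ‖ω - x‖ - ‖ω' - x‖ > ε/2 for some ε ∈ (0,1) with θ' + ε/2 ≤ π. Then θ - θ' > ε/2 (arc-length differences exceed chord-length differences). -/

import Mathlib

open InnerProductGeometry Real RealInnerProductSpace

lemma chord_eq (N : ℕ) (x ω : EuclideanSpace ℝ (Fin N))
    (hx : ‖x‖ = 1) (hω : ‖ω‖ = 1) :
    ‖ω - x‖ = 2 * Real.sin (angle x ω / 2) := by
  have hθ0 := angle_nonneg x ω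
  have hθπ := angle_le_pi x ω
  have hsin : 0 ≤ Real.sin (angle x ω / 2) :=
    Real.sin_nonneg_of_nonneg_of_le_pi (by linarith) (by linarith [Real.pi_pos])
  have hcos : Real.cos (angle x ω) = (inner ℝ x ω : ℝ) := by
    rw [cos_angle, hx, hω]; ring
  have hsq : ‖ω - x‖ ^ 2 = (2 * Real.sin (angle x ω / 2)) ^ 2 := by
    have h1 : ‖ω - x‖ ^ 2 = 2 - 2 * (inner ℝ x ω : ℝ) := by
      rw [norm_sub_sq_real, hx, hω, real_inner_comm]; ring
    have h2 : Real.cos (angle x ω) = 1 - 2 * Real.sin (angle x ω / 2) ^ 2 := by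
      have h := Real.sin_sq_eq_half_sub (angle x ω / 2)
      rw [show 2 * (angle x ω / 2) = angle x ω by ring] at h
      linarith
    rw [h1, ← hcos, h2]; ring
  nlinarith [norm_nonneg (ω - x)]

lemma sin_diff_le {a b : ℝ} (hb : 0 ≤ b) (hab : b ≤ a) (ha : a ≤ π) :
    Real.sin a - Real.sin b ≤ a - b := by
  rw [Real.sin_sub_sin]
  have h1 : 0 ≤ (a - b) / 2 := by linarith
  have h2 : (a - b) / 2 ≤ π := by linarith [Real.pi_pos]
  have h3 : Real.sin ((a - b) / 2) ≤ (a - b) / 2 := Real.sin_le h1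
  have h4 : 0 ≤ Real.sin ((a - b) / 2) := Real.sin_nonneg_of_nonneg_of_le_pi h1 h2
  have h5 : Real.cos ((a + b) / 2) ≤ 1 := Real.cos_le_one _
  nlinarith

theorem stmt_8 (N : ℕ) (x ω ω' : EuclideanSpace ℝ (Fin N))
    (hx : ‖x‖ = 1) (hω : ‖ω‖ = 1) (hω' : ‖ω'‖ = 1)
    (ε : ℝ) (hε : 0 < ε) (hε1 : ε < 1)
    (hθ' : InnerProductGeometry.angle x ω' + ε / 2 ≤ Real.pi)
    (hchord : ‖ω - x‖ - ‖ω' - x‖ > ε / 2) :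
    InnerProductGeometry.angle x ω - InnerProductGeometry.angle x ω' > ε / 2 := by
  rw [chord_eq N x ω hx hω, chord_eq N x ω' hx hω'] at hchord
  have h0 := angle_nonneg x ω
  have h1 := angle_le_pi x ω
  have h0' := angle_nonneg x ω'
  have h1' := angle_le_pi x ω'
  have hle : angle x ω' / 2 ≤ angle x ω / 2 := by
    by_contra hlt
    push_neg at hlt
    have := Real.sin_le_sin_of_le_of_le_pi_div_two (by linarith [Real.pi_pos])
      (by linarith) hlt.le
    linarith
  have := sin_diff_le (b := angle x ω' / 2) (a := angle x ω / 2)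
    (by linarith) hle (by linarith [Real.pi_pos])
  linarith
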